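/- The Dedekind sum satisfies the reciprocity law: for coprime positive integers h and k, s(h, k) + s(k, h) = −1/4 + (1/12)(h/k + k/h + 1/(hk)). -/

import Mathlib

open Finset

lemma sumIcoId (k : ℕ) : ∑ r ∈ Finset.Ico 1 k, (r:ℚ) = k*(k-1)/2 := by
  induction k with
  | zero => simp
  | succ n ih =>
    rcases Nat.eq_zero_or_pos n with rfl|hn
    · simp
    · rw [Finset.sum_Ico_succ_top hn, ih]; push_cast; ring

lemma sumIcoSq (k : ℕ) : ∑ r ∈ Finset.Ico 1 k, (r:ℚ)^2 = k*(k-1)*(2*k-1)/6 := by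
  induction k with
  | zero => simp
  | succ n ih =>
    rcases Nat.eq_zero_or_pos n with rfl|hn
    · simp
    · rw [Finset.sum_Ico_succ_top hn, ih]; push_cast; ring

-- no equality h*r = k*s
lemma mulNe (h k r s : ℕ) (hcop : Nat.gcd h k = 1) (hs1 : 1 ≤ s) (hsh : s < h) :
    h * r ≠ k * s := by
  intro he
  have hdvd : h ∣ k * s := ⟨r, he.symm⟩
  have : h ∣ s := (Nat.Coprime.dvd_of_dvd_mul_left hcop hdvd)
  exact absurd (Nat.le_of_dvd hs1 this) (by omega)

lemma filtEq (h k s : ℕ) (hh : 0 < h) (hk : 0 < k) (hcop : Nat.gcd h k = 1)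
    (hs1 : 1 ≤ s) (hsh : s < h) :
    (Finset.Ico 1 k).filter (fun r => h * r < k * s) = Finset.Ico 1 (k * s / h + 1) := by
  ext r
  simp only [Finset.mem_filter, Finset.mem_Ico]
  constructor
  · rintro ⟨⟨h1, h2⟩, hlt⟩
    refine ⟨h1, ?_⟩
    have : r ≤ k * s / h := (Nat.le_div_iff_mul_le hh).2 (by rw [Nat.mul_comm]; omega)
    omega
  · rintro ⟨h1, h2⟩
    have hle : r * h ≤ k * s := (Nat.le_div_iff_mul_le hh).1 (by omega)
    have hle' : h * r ≤ k * s := by rwa [Nat.mul_comm] at hle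
    have hne : h * r ≠ k * s := mulNe h k r s hcop hs1 hsh
    have hdk : k * s / h < k := (Nat.div_lt_iff_lt_mul hh).2 ((Nat.mul_lt_mul_left hk).2 hsh)
    exact ⟨⟨h1, by omega⟩, by omega⟩

lemma imageEq (h k : ℕ) (hk : 0 < k) (hcop : Nat.gcd h k = 1) :
    (Finset.Ico 1 k).image (fun r => h * r % k) = Finset.Ico 1 k := by
  have hsub : (Finset.Ico 1 k).image (fun r => h * r % k) ⊆ Finset.Ico 1 k := by
    intro x hx
    simp only [Finset.mem_image, Finset.mem_Ico] at hx ⊢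
    obtain ⟨r, ⟨hr1, hr2⟩, rfl⟩ := hx
    refine ⟨?_, Nat.mod_lt _ hk⟩
    by_contra hz
    have hz0 : h * r % k = 0 := by omega
    have hdvd : k ∣ h * r := Nat.dvd_of_mod_eq_zero hz0
    have : k ∣ r := (Nat.Coprime.dvd_of_dvd_mul_left (Nat.coprime_comm.1 hcop) hdvd)
    exact absurd (Nat.le_of_dvd (by omega) this) (by omega)
  have hinj : Set.InjOn (fun r => h * r % k) (Finset.Ico 1 k) := by
    intro a ha b hb hab
    simp only [Finset.coe_Ico, Set.mem_Ico] at ha hb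
    have hmod : a ≡ b [MOD k] := by
      have : h * a ≡ h * b [MOD k] := hab
      exact Nat.ModEq.cancel_left_of_coprime (by rwa [Nat.gcd_comm]) this
    have := hmod.eq_of_lt_of_lt ha.2 hb.2
    exact this
  apply Finset.eq_of_subset_of_card_le hsub
  rw [Finset.card_image_of_injOn hinj]

lemma sumPerm (h k : ℕ) (hk : 0 < k) (hcop : Nat.gcd h k = 1) (g : ℕ → ℚ) :
    ∑ r ∈ Finset.Ico 1 k, g (h * r % k) = ∑ r ∈ Finset.Ico 1 k, g r := by
  conv_rhs => rw [← imageEq h k hk hcop]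
  rw [Finset.sum_image]
  intro a ha b hb hab
  have hinj : Set.InjOn (fun r => h * r % k) (Finset.Ico 1 k) := by
    intro a ha b hb hab
    simp only [Finset.coe_Ico, Set.mem_Ico] at ha hb
    have hmod : a ≡ b [MOD k] := Nat.ModEq.cancel_left_of_coprime (by rwa [Nat.gcd_comm]) hab
    exact hmod.eq_of_lt_of_lt ha.2 hb.2
  exact hinj (by simpa using ha) (by simpa using hb) hab

lemma crossId (h k : ℕ) (hh : 0 < h) (hk : 0 < k) (hcop : Nat.gcd h k = 1) :
    2 * ∑ s ∈ Finset.Ico 1 h, (s:ℚ) * ((k*s/h : ℕ):ℚ)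
      = ∑ r ∈ Finset.Ico 1 k,
          (2*(h:ℚ)*((h*r/k : ℕ):ℚ) - ((h*r/k : ℕ):ℚ)^2 - ((h*r/k : ℕ):ℚ)) := by
  have hcop' : Nat.gcd k h = 1 := by rwa [Nat.gcd_comm]
  -- Step A+B : LHS inner sum as a sum over a filtered product
  have stepA : ∑ s ∈ Finset.Ico 1 h, (s:ℚ) * ((k*s/h : ℕ):ℚ)
      = ∑ p ∈ (Finset.Ico 1 k ×ˢ Finset.Ico 1 h).filter (fun p => h*p.1 < k*p.2),
          ((p.2 : ℚ)) := by
    rw [Finset.sum_filter, Finset.sum_product, Finset.sum_comm]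
    apply Finset.sum_congr rfl
    intro s hs
    simp only [Finset.mem_Ico] at hs
    rw [← Finset.sum_filter, filtEq h k s hh hk hcop hs.1 hs.2]
    simp [mul_comm]
  -- Step C : involution
  have stepC : ∑ p ∈ (Finset.Ico 1 k ×ˢ Finset.Ico 1 h).filter (fun p => h*p.1 < k*p.2),
          ((p.2 : ℚ))
      = ∑ p ∈ (Finset.Ico 1 k ×ˢ Finset.Ico 1 h).filter (fun p => k*p.2 < h*p.1),
          ((h:ℚ) - (p.2 : ℚ)) := by
    apply Finset.sum_nbij' (i := fun p => (k - p.1, h - p.2)) (j := fun p => (k - p.1, h - p.2))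
    · rintro ⟨a, b⟩ hp
      simp only [Finset.mem_filter, Finset.mem_product, Finset.mem_Ico] at hp ⊢
      obtain ⟨⟨⟨ha1, ha2⟩, hb1, hb2⟩, hlt⟩ := hp
      refine ⟨⟨⟨by omega, by omega⟩, by omega, by omega⟩, ?_⟩
      have e1 : k * (h - b) = k * h - k * b := by
        rw [Nat.mul_sub]
      have e2 : h * (k - a) = h * k - h * a := by
        rw [Nat.mul_sub]
      have hb' : k * b ≤ k * h := Nat.mul_le_mul_left k (by omega)
      have ha' : h * a ≤ h * k := Nat.mul_le_mul_left h (by omega)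
      have hkh : k * h = h * k := Nat.mul_comm k h
      omega
    · rintro ⟨a, b⟩ hp
      simp only [Finset.mem_filter, Finset.mem_product, Finset.mem_Ico] at hp ⊢
      obtain ⟨⟨⟨ha1, ha2⟩, hb1, hb2⟩, hlt⟩ := hp
      refine ⟨⟨⟨by omega, by omega⟩, by omega, by omega⟩, ?_⟩
      have e1 : k * (h - b) = k * h - k * b := by rw [Nat.mul_sub]
      have e2 : h * (k - a) = h * k - h * a := by rw [Nat.mul_sub]
      have hb' : k * b ≤ k * h := Nat.mul_le_mul_left k (by omega)
      have ha' : h * a ≤ h * k := Nat.mul_le_mul_left h (by omega)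
      have hkh : k * h = h * k := Nat.mul_comm k h
      omega
    · rintro ⟨a, b⟩ hp
      simp only [Finset.mem_filter, Finset.mem_product, Finset.mem_Ico] at hp
      have : k - (k - a) = a := by omega
      have : h - (h - b) = b := by omega
      simp only [Prod.mk.injEq]
      constructor <;> omega
    · rintro ⟨a, b⟩ hp
      simp only [Finset.mem_filter, Finset.mem_product, Finset.mem_Ico] at hp
      simp only [Prod.mk.injEq]
      constructor <;> omega
    · rintro ⟨a, b⟩ hp
      simp only [Finset.mem_filter, Finset.mem_product, Finset.mem_Ico] at hp
      have hb : b ≤ h := by omega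
      push_cast [Nat.cast_sub hb]
      ring
  -- Step D : back to iterated sum over r
  have stepD : ∑ p ∈ (Finset.Ico 1 k ×ˢ Finset.Ico 1 h).filter (fun p => k*p.2 < h*p.1),
          ((h:ℚ) - (p.2 : ℚ))
      = ∑ r ∈ Finset.Ico 1 k, ((h:ℚ) * ((h*r/k : ℕ):ℚ)
          - ((h*r/k : ℕ):ℚ) * (((h*r/k : ℕ):ℚ) + 1) / 2) := by
    rw [Finset.sum_filter, Finset.sum_product]
    apply Finset.sum_congr rfl
    intro r hr
    simp only [Finset.mem_Ico] at hr
    rw [← Finset.sum_filter, filtEq k h r hk hh hcop' hr.1 hr.2, Finset.sum_sub_distrib,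
      Finset.sum_const, Nat.card_Ico, sumIcoId]
    push_cast
    ring
  rw [stepA, stepC, stepD, Finset.mul_sum]
  apply Finset.sum_congr rfl
  intro r _
  ring

/-- The Dedekind sum `s(h, k) = ∑_{r=1}^{k-1} (r/k)(hr/k − ⌊hr/k⌋ − 1/2)`. -/
noncomputable def dedekindSum (h : ℤ) (k : ℕ) : ℚ :=
  ∑ r ∈ Finset.Ico 1 k,
    ((r : ℚ) / k) * (((h : ℚ) * r) / k - ⌊((h : ℚ) * r) / k⌋ - 1 / 2)

lemma dedEq (h k : ℕ) (hk : 0 < k) :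
    dedekindSum (h:ℤ) k =
      ((h:ℚ) * (∑ r ∈ Finset.Ico 1 k, (r:ℚ)^2)
        - (k:ℚ) * ∑ r ∈ Finset.Ico 1 k, (r:ℚ)*((h*r/k : ℕ):ℚ)) / (k:ℚ)^2
      - (∑ r ∈ Finset.Ico 1 k, (r:ℚ)) / (2*(k:ℚ)) := by
  have hkQ : (k:ℚ) ≠ 0 := Nat.cast_ne_zero.2 hk.ne'
  unfold dedekindSum
  have e : ∀ r ∈ Finset.Ico 1 k,
      ((r : ℚ) / k) * ((((h:ℤ) : ℚ) * r) / k - ⌊(((h:ℤ) : ℚ) * r) / k⌋ - 1 / 2)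
        = ((h:ℚ)*(r:ℚ)^2 - (k:ℚ)*((r:ℚ)*((h*r/k : ℕ):ℚ))) / (k:ℚ)^2
          - (r:ℚ)/(2*(k:ℚ)) := by
    intro r hr
    have hfl : ⌊((h:ℚ) * (r:ℚ))/(k:ℚ)⌋ = ((h*r/k : ℕ) : ℤ) := by
      rw [show ((h:ℚ)*(r:ℚ)) = ((h*r : ℕ):ℚ) by push_cast; ring]
      exact_mod_cast Rat.floor_natCast_div_natCast (h*r) k
    simp only [Int.cast_natCast, hfl]
    norm_num
    field_simp
  rw [Finset.sum_congr rfl e, Finset.sum_sub_distrib, ← Finset.sum_div, ← Finset.sum_div,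
    Finset.sum_sub_distrib, ← Finset.mul_sum, ← Finset.mul_sum]

open Finset in
/-- Dedekind sum reciprocity: for coprime positive integers `h` and `k`,
`s(h,k) + s(k,h) = −1/4 + (1/12)(h/k + k/h + 1/(hk))`. -/
theorem dedekindSum_reciprocity (h k : ℕ) (hh : 0 < h) (hk : 0 < k)
    (hcop : Nat.gcd h k = 1) :
    dedekindSum (h : ℤ) k + dedekindSum (k : ℤ) h =
      -1 / 4 + (1 / 12) * ((h : ℚ) / k + (k : ℚ) / h + 1 / ((h : ℚ) * k)) := by
  have hcop' : Nat.gcd k h = 1 := by rwa [Nat.gcd_comm]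
  have hkQ : (k:ℚ) ≠ 0 := Nat.cast_ne_zero.2 hk.ne'
  have hhQ : (h:ℚ) ≠ 0 := Nat.cast_ne_zero.2 hh.ne'
  have modEqk : ∀ r : ℕ, ((h*r % k : ℕ):ℚ) = (h:ℚ)*r - (k:ℚ)*((h*r/k : ℕ):ℚ) := by
    intro r
    have := congrArg (Nat.cast : ℕ → ℚ) (Nat.div_add_mod (h*r) k)
    push_cast at this
    linarith
  have modEqh : ∀ s : ℕ, ((k*s % h : ℕ):ℚ) = (k:ℚ)*s - (h:ℚ)*((k*s/h : ℕ):ℚ) := by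
    intro s
    have := congrArg (Nat.cast : ℕ → ℚ) (Nat.div_add_mod (k*s) h)
    push_cast at this
    linarith
  -- I1 identities giving the values of A4 and B4
  have hA4 : ∑ r ∈ Finset.Ico 1 k, ((h*r/k : ℕ):ℚ) = ((h:ℚ)-1)*((k:ℚ)-1)/2 := by
    have e1 := sumPerm h k hk hcop (fun n => (n:ℚ))
    have e2 : ∑ r ∈ Finset.Ico 1 k, ((h*r % k : ℕ):ℚ)
        = ∑ r ∈ Finset.Ico 1 k, ((h:ℚ)*r - (k:ℚ)*((h*r/k : ℕ):ℚ)) :=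
      Finset.sum_congr rfl fun r _ => modEqk r
    rw [e2, Finset.sum_sub_distrib, ← Finset.mul_sum, ← Finset.mul_sum, sumIcoId] at e1
    have e3 : (k:ℚ) * (∑ r ∈ Finset.Ico 1 k, ((h*r/k : ℕ):ℚ))
        = (k:ℚ) * (((h:ℚ)-1)*((k:ℚ)-1)/2) := by linear_combination -e1
    exact mul_left_cancel₀ hkQ e3
  have hB4 : ∑ s ∈ Finset.Ico 1 h, ((k*s/h : ℕ):ℚ) = ((h:ℚ)-1)*((k:ℚ)-1)/2 := by
    have e1 := sumPerm k h hh hcop' (fun n => (n:ℚ))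
    have e2 : ∑ s ∈ Finset.Ico 1 h, ((k*s % h : ℕ):ℚ)
        = ∑ s ∈ Finset.Ico 1 h, ((k:ℚ)*s - (h:ℚ)*((k*s/h : ℕ):ℚ)) :=
      Finset.sum_congr rfl fun s _ => modEqh s
    rw [e2, Finset.sum_sub_distrib, ← Finset.mul_sum, ← Finset.mul_sum, sumIcoId] at e1
    have e3 : (h:ℚ) * (∑ s ∈ Finset.Ico 1 h, ((k*s/h : ℕ):ℚ))
        = (h:ℚ) * (((h:ℚ)-1)*((k:ℚ)-1)/2) := by linear_combination -e1
    exact mul_left_cancel₀ hhQ e3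
  -- I2 identities
  have H2k : (h:ℚ)^2*((k:ℚ)*((k:ℚ)-1)*(2*(k:ℚ)-1)/6)
      - 2*(h:ℚ)*(k:ℚ)*(∑ r ∈ Finset.Ico 1 k, (r:ℚ)*((h*r/k : ℕ):ℚ))
      + (k:ℚ)^2*(∑ r ∈ Finset.Ico 1 k, ((h*r/k : ℕ):ℚ)^2)
      = (k:ℚ)*((k:ℚ)-1)*(2*(k:ℚ)-1)/6 := by
    have e1 := sumPerm h k hk hcop (fun n => (n:ℚ)^2)
    have e2 : ∑ r ∈ Finset.Ico 1 k, ((h*r % k : ℕ):ℚ)^2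
        = ∑ r ∈ Finset.Ico 1 k, ((h:ℚ)^2*(r:ℚ)^2
            - 2*(h:ℚ)*(k:ℚ)*((r:ℚ)*((h*r/k : ℕ):ℚ)) + (k:ℚ)^2*((h*r/k : ℕ):ℚ)^2) :=
      Finset.sum_congr rfl fun r _ => by rw [modEqk r]; ring
    rw [e2, Finset.sum_add_distrib, Finset.sum_sub_distrib, ← Finset.mul_sum,
      ← Finset.mul_sum, ← Finset.mul_sum, sumIcoSq] at e1
    exact e1
  have H2h : (k:ℚ)^2*((h:ℚ)*((h:ℚ)-1)*(2*(h:ℚ)-1)/6)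
      - 2*(h:ℚ)*(k:ℚ)*(∑ s ∈ Finset.Ico 1 h, (s:ℚ)*((k*s/h : ℕ):ℚ))
      + (h:ℚ)^2*(∑ s ∈ Finset.Ico 1 h, ((k*s/h : ℕ):ℚ)^2)
      = (h:ℚ)*((h:ℚ)-1)*(2*(h:ℚ)-1)/6 := by
    have e1 := sumPerm k h hh hcop' (fun n => (n:ℚ)^2)
    have e2 : ∑ s ∈ Finset.Ico 1 h, ((k*s % h : ℕ):ℚ)^2
        = ∑ s ∈ Finset.Ico 1 h, ((k:ℚ)^2*(s:ℚ)^2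
            - 2*(h:ℚ)*(k:ℚ)*((s:ℚ)*((k*s/h : ℕ):ℚ)) + (h:ℚ)^2*((k*s/h : ℕ):ℚ)^2) :=
      Finset.sum_congr rfl fun s _ => by rw [modEqh s]; ring
    rw [e2, Finset.sum_add_distrib, Finset.sum_sub_distrib, ← Finset.mul_sum,
      ← Finset.mul_sum, ← Finset.mul_sum, sumIcoSq] at e1
    linear_combination e1
  -- cross identities
  have H3 : 2 * (∑ s ∈ Finset.Ico 1 h, (s:ℚ)*((k*s/h : ℕ):ℚ))
      = 2*(h:ℚ)*(∑ r ∈ Finset.Ico 1 k, ((h*r/k : ℕ):ℚ))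
        - (∑ r ∈ Finset.Ico 1 k, ((h*r/k : ℕ):ℚ)^2)
        - (∑ r ∈ Finset.Ico 1 k, ((h*r/k : ℕ):ℚ)) := by
    have := crossId h k hh hk hcop
    rw [Finset.sum_sub_distrib, Finset.sum_sub_distrib, ← Finset.mul_sum] at this
    exact this
  -- key combination
  have hkey : 2*(h:ℚ)*(k:ℚ)*(∑ r ∈ Finset.Ico 1 k, (r:ℚ)*((h*r/k : ℕ):ℚ))
      + 2*(k:ℚ)^2*(∑ s ∈ Finset.Ico 1 h, (s:ℚ)*((k*s/h : ℕ):ℚ))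
      = (2*(h:ℚ)-1)*(k:ℚ)^2*(((h:ℚ)-1)*((k:ℚ)-1)/2)
        + ((h:ℚ)^2-1)*((k:ℚ)*((k:ℚ)-1)*(2*(k:ℚ)-1)/6) := by
    linear_combination (k:ℚ)^2*H3 - H2k + ((2*(h:ℚ)-1)*(k:ℚ)^2)*hA4
  rw [dedEq h k hk, dedEq k h hh, sumIcoId k, sumIcoSq k, sumIcoId h, sumIcoSq h]
  field_simp
  linear_combination (norm := skip) (-576/(k:ℚ)) * hkey
  field_simp
  ring
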